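/- Let 1 → N → G → H → 1 be a short exact sequence of groups. If both N and H satisfy the Tits alternative, then G satisfies the Tits alternative. -/

import Mathlib

/-- A group is *virtually solvable* if it contains a solvable subgroup of finite index. -/
def VirtuallySolvable (G : Type*) [Group G] : Prop :=
  ∃ K : Subgroup G, K.FiniteIndex ∧ IsSolvable K

/-- A group `G` satisfies the *Tits alternative* if every subgroup of `G` either contains
a subgroup isomorphic to the non-abelian free group of rank 2 or is virtually solvable. -/
def SatisfiesTitsAlternative (G : Type*) [Group G] : Prop :=
  ∀ H : Subgroup G, (∃ φ : FreeGroup (Fin 2) →* H, Function.Injective φ) ∨ VirtuallySolvable H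

/-- Virtual solvability transfers along group isomorphisms. -/
lemma vs_of_mulEquiv {G H : Type*} [Group G] [Group H] (e : G ≃* H) :
    VirtuallySolvable G → VirtuallySolvable H := by
  rintro ⟨K, hK, hs⟩
  haveI : Group.IsSolvable K := hs
  refine ⟨K.map e.toMonoidHom, ?_, ?_⟩
  · constructor
    rw [Subgroup.index_map_eq _ e.surjective
      (by rw [(MonoidHom.ker_eq_bot_iff _).mpr e.injective]; exact bot_le)]
    exact hK.index_ne_zero
  · exact solvable_of_surjective
      (f := (Subgroup.equivMapOfInjective K e.toMonoidHom e.injective).toMonoidHom)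
      (Subgroup.equivMapOfInjective K e.toMonoidHom e.injective).surjective

/-- The join of two normal solvable subgroups is solvable. -/
lemma isSolvable_sup {G : Type*} [Group G] {U V : Subgroup G} (hU : U.Normal) (hV : V.Normal)
    (hUs : Group.IsSolvable U) (hVs : Group.IsSolvable V) : Group.IsSolvable ↥(U ⊔ V) := by
  haveI := hV
  haveI := hUs
  let q := (QuotientGroup.mk' V).subgroupMap (U ⊔ V)
  have hmap : (U ⊔ V).map (QuotientGroup.mk' V) = U.map (QuotientGroup.mk' V) := by
    rw [Subgroup.map_sup]
    have : V.map (QuotientGroup.mk' V) = ⊥ := by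
      rw [Subgroup.map_eq_bot_iff, QuotientGroup.ker_mk']
    rw [this, sup_bot_eq]
  haveI : Group.IsSolvable ↥((U ⊔ V).map (QuotientGroup.mk' V)) := by
    rw [hmap]
    exact solvable_of_surjective ((QuotientGroup.mk' V).subgroupMap_surjective U)
  have hker : q.ker = V.subgroupOf (U ⊔ V) := by
    ext x
    simp only [MonoidHom.mem_ker, Subgroup.mem_subgroupOf]
    constructor
    · intro hx
      have : ((QuotientGroup.mk' V) (x : G)) = 1 := congrArg Subtype.val hx
      exact (QuotientGroup.eq_one_iff _).mp this
    · intro hx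
      apply Subtype.ext
      show (QuotientGroup.mk' V) (x : G) = 1
      exact (QuotientGroup.eq_one_iff _).mpr hx
  haveI : Group.IsSolvable ↥(V.subgroupOf (U ⊔ V)) :=
    solvable_of_surjective
      (f := (Subgroup.subgroupOfEquivOfLe (le_sup_right : V ≤ U ⊔ V)).symm.toMonoidHom)
      (Subgroup.subgroupOfEquivOfLe (le_sup_right : V ≤ U ⊔ V)).symm.surjective
  exact solvable_of_ker_le_range (V.subgroupOf (U ⊔ V)).subtype q
    (by rw [hker, Subgroup.range_subtype])

/-- The join of a finite set of normal solvable subgroups is solvable. -/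
lemma isSolvable_sSup_of_finite {G : Type*} [Group G] (S : Set (Subgroup G)) (hfin : S.Finite)
    (h : ∀ U ∈ S, U.Normal ∧ Group.IsSolvable ↥U) : (sSup S).Normal ∧ Group.IsSolvable ↥(sSup S) := by
  refine Set.Finite.induction_on_subset (motive := fun s _ => (sSup s : Subgroup G).Normal ∧ Group.IsSolvable ↥(sSup s : Subgroup G)) S hfin ?_ ?_
  · rw [sSup_empty]
    exact ⟨inferInstance, isSolvable_of_comm fun a b => Subsingleton.elim _ _⟩
  · intro a s haS _ _ ih
    have ha := h a haS
    rw [sSup_insert]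
    haveI := ha.1; haveI := ih.1
    exact ⟨Subgroup.sup_normal a (sSup s), isSolvable_sup ha.1 ih.1 ha.2 ih.2⟩

/-- Key extension lemma: if `A` is a normal subgroup of `G` with `↥A` virtually solvable
and `G ⧸ A` solvable, then `G` is virtually solvable. -/
lemma vs_of_normal_vs_solvable_quotient {G : Type*} [Group G] (A : Subgroup G) [A.Normal]
    (hA : VirtuallySolvable ↥A) (hq : Group.IsSolvable (G ⧸ A)) : VirtuallySolvable G := by
  obtain ⟨S, hSfi, hSsolv⟩ := hA
  haveI := hSfi
  haveI : Group.IsSolvable S := hSsolv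
  set S₀ : Subgroup ↥A := S.normalCore with hS₀def
  haveI hS₀solv : Group.IsSolvable ↥S₀ :=
    solvable_of_solvable_injective (Subgroup.inclusion_injective S.normalCore_le)
  -- the family of all normal solvable finite-index subgroups of `A`
  set 𝒮 : Set (Subgroup ↥A) := {V | V.Normal ∧ Group.IsSolvable ↥V ∧ V.FiniteIndex} with h𝒮def
  set 𝒮' : Set (Subgroup ↥A) := {V | V ∈ 𝒮 ∧ S₀ ≤ V} with h𝒮'def
  have hS₀mem : S₀ ∈ 𝒮 := ⟨inferInstance, inferInstance, inferInstance⟩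
  have hfin : 𝒮'.Finite := by
    refine Set.Finite.of_finite_image (f := fun V : Subgroup ↥A => V.map (QuotientGroup.mk' S₀))
      (Set.toFinite _) ?_
    intro V hV W hW hVW
    have hV' : (V.map (QuotientGroup.mk' S₀)).comap (QuotientGroup.mk' S₀) = V := by
      rw [Subgroup.comap_map_eq, QuotientGroup.ker_mk', sup_of_le_left hV.2]
    have hW' : (W.map (QuotientGroup.mk' S₀)).comap (QuotientGroup.mk' S₀) = W := by
      rw [Subgroup.comap_map_eq, QuotientGroup.ker_mk', sup_of_le_left hW.2]
    rw [← hV', ← hW']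
    exact congrArg (Subgroup.comap (QuotientGroup.mk' S₀)) hVW
  have key : sSup 𝒮 = sSup 𝒮' := by
    apply le_antisymm
    · apply sSup_le
      intro V hV
      haveI := hV.1; haveI := hV.2.1; haveI := hV.2.2
      refine le_trans (le_sup_left : V ≤ V ⊔ S₀) (le_sSup ?_)
      exact ⟨⟨Subgroup.sup_normal V S₀, isSolvable_sup hV.1 inferInstance hV.2.1 hS₀solv,
        Subgroup.finiteIndex_of_le le_sup_right⟩, le_sup_right⟩
    · exact sSup_le_sSup fun V hV => hV.1
  set T : Subgroup ↥A := sSup 𝒮 with hTdef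
  obtain ⟨hTnormal, hTsolv⟩ : T.Normal ∧ Group.IsSolvable ↥T := by
    rw [key]
    exact isSolvable_sSup_of_finite 𝒮' hfin fun U hU => ⟨hU.1.1, hU.1.2.1⟩
  haveI := hTsolv
  haveI hTfi : T.FiniteIndex := Subgroup.finiteIndex_of_le (le_sSup hS₀mem)
  -- `T` is invariant under conjugation by elements of `G`
  have hconj : ∀ k : G, T.map (MulAut.conjNormal k).toMonoidHom ≤ T := by
    intro k
    set σ : ↥A →* ↥A := (MulAut.conjNormal k).toMonoidHom with hσdef
    have hσsurj : Function.Surjective σ := (MulAut.conjNormal k).surjective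
    have hσinj : Function.Injective σ := (MulAut.conjNormal k).injective
    rw [hTdef, sSup_eq_iSup', Subgroup.map_iSup]
    apply iSup_le
    rintro ⟨V, hVn, hVs, hVf⟩
    haveI := hVs
    have hmem : Subgroup.map σ V ∈ 𝒮 := by
      refine ⟨hVn.map σ hσsurj, ?_, ?_⟩
      · exact solvable_of_surjective (f := σ.subgroupMap V) (σ.subgroupMap_surjective V)
      · constructor
        have hk : σ.ker ≤ V := by
          rw [(MonoidHom.ker_eq_bot_iff σ).mpr hσinj]; exact bot_le
        rw [V.index_map_eq hσsurj hk]
        exact hVf.index_ne_zero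
    exact le_iSup_of_le ⟨Subgroup.map σ V, hmem⟩ le_rfl
  set T' : Subgroup G := T.map A.subtype with hT'def
  have hT'A : T' ≤ A := Subgroup.map_subtype_le T
  haveI hT'n : T'.Normal := by
    constructor
    intro n hn k
    obtain ⟨a, haT, rfl⟩ := hn
    refine ⟨MulAut.conjNormal k a, hconj k (Subgroup.mem_map_of_mem _ haT), ?_⟩
    simp [MulAut.conjNormal_apply]
  haveI hT'solv : Group.IsSolvable ↥T' :=
    solvable_of_surjective
      (f := (Subgroup.equivMapOfInjective T A.subtype A.subtype_injective).toMonoidHom)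
      (Subgroup.equivMapOfInjective T A.subtype A.subtype_injective).surjective
  set π := QuotientGroup.mk' T' with hπdef
  set A'' : Subgroup (G ⧸ T') := A.map π with hA''def
  haveI hA''n : A''.Normal := Subgroup.Normal.map ‹A.Normal› π (QuotientGroup.mk'_surjective T')
  set ψ : ↥A →* G ⧸ T' := π.comp A.subtype with hψdef
  have hψrange : ψ.range = A'' := by
    rw [hψdef, MonoidHom.range_comp, Subgroup.range_subtype]
  have hψker : ψ.ker = T := by
    rw [hψdef, ← MonoidHom.comap_ker, QuotientGroup.ker_mk', hT'def]
    exact Subgroup.comap_map_eq_self_of_injective A.subtype_injective T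
  haveI hA''fin : Finite ↥A'' := by
    rw [← hψrange]
    haveI : Finite (↥A ⧸ ψ.ker) := by rw [hψker]; infer_instance
    exact Finite.of_equiv _ (QuotientGroup.quotientKerEquivRange ψ).toEquiv
  haveI hQsolv : Group.IsSolvable ((G ⧸ T') ⧸ A'') := by
    haveI := hq
    exact solvable_of_solvable_injective
      (f := (QuotientGroup.quotientQuotientEquivQuotient T' A hT'A).toMonoidHom)
      (QuotientGroup.quotientQuotientEquivQuotient T' A hT'A).injective
  set D : Subgroup (G ⧸ T') := (MulAut.conjNormal (G := G ⧸ T') (H := A'')).ker with hDdef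
  haveI : Finite (MulAut ↥A'') :=
    Finite.of_injective (fun e : MulAut ↥A'' => (e : ↥A'' → ↥A'')) DFunLike.coe_injective
  haveI hDfi : D.FiniteIndex := Subgroup.finiteIndex_ker _
  haveI hDsolv : Group.IsSolvable ↥D := by
    set g₂ : ↥D →* (G ⧸ T') ⧸ A'' := (QuotientGroup.mk' A'').comp D.subtype with hg₂def
    have hker₂ : g₂.ker = A''.subgroupOf D := by
      rw [hg₂def, ← MonoidHom.comap_ker, QuotientGroup.ker_mk']
      rfl
    haveI : Group.IsSolvable ↥(A''.subgroupOf D) := by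
      refine isSolvable_of_comm fun x y => ?_
      apply Subtype.ext; apply Subtype.ext
      simp only [Subgroup.coe_mul]
      have hx : ((x : ↥D) : G ⧸ T') ∈ A'' := x.2
      have h1 : MulAut.conjNormal ((y : ↥D) : G ⧸ T') = 1 := MonoidHom.mem_ker.mp (y : ↥D).2
      have h2 : ((y : ↥D) : G ⧸ T') * ((x : ↥D) : G ⧸ T') * ((y : ↥D) : G ⧸ T')⁻¹
          = ((x : ↥D) : G ⧸ T') := by
        have := congrArg
          (fun e : MulAut ↥A'' => ((e ⟨((x : ↥D) : G ⧸ T'), hx⟩ : ↥A'') : G ⧸ T')) h1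
        simpa [MulAut.conjNormal_apply] using this
      calc ((x : ↥D) : G ⧸ T') * ((y : ↥D) : G ⧸ T')
          = (((y : ↥D) : G ⧸ T') * ((x : ↥D) : G ⧸ T') * ((y : ↥D) : G ⧸ T')⁻¹)
            * ((y : ↥D) : G ⧸ T') := by rw [h2]
        _ = ((y : ↥D) : G ⧸ T') * ((x : ↥D) : G ⧸ T') := by group
    exact solvable_of_ker_le_range (A''.subgroupOf D).subtype g₂
      (by rw [hker₂, Subgroup.range_subtype])
  set Dpre : Subgroup G := D.comap π with hDpredef
  have hT'Dpre : T' ≤ Dpre := by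
    intro x hx
    show π x ∈ D
    have : π x = 1 := by rwa [← MonoidHom.mem_ker, QuotientGroup.ker_mk']
    rw [this]
    exact D.one_mem
  refine ⟨Dpre, ?_, ?_⟩
  · constructor
    rw [hDpredef, Subgroup.index_comap_of_surjective _ (QuotientGroup.mk'_surjective T')]
    exact hDfi.index_ne_zero
  · set g₃ : ↥Dpre →* G ⧸ T' := π.comp Dpre.subtype with hg₃def
    have hrange₃ : g₃.range = D := by
      rw [hg₃def, MonoidHom.range_comp, Subgroup.range_subtype, hDpredef]
      exact Subgroup.map_comap_eq_self_of_surjective (QuotientGroup.mk'_surjective T') D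
    have hker₃ : g₃.ker = T'.subgroupOf Dpre := by
      rw [hg₃def, ← MonoidHom.comap_ker, QuotientGroup.ker_mk']
      rfl
    haveI : Group.IsSolvable ↥(T'.subgroupOf Dpre) :=
      solvable_of_surjective
        (f := (Subgroup.subgroupOfEquivOfLe hT'Dpre).symm.toMonoidHom)
        (Subgroup.subgroupOfEquivOfLe hT'Dpre).symm.surjective
    haveI : Group.IsSolvable ↥g₃.range := by rw [hrange₃]; exact hDsolv
    exact solvable_of_ker_le_range (T'.subgroupOf Dpre).subtype g₃.rangeRestrict
      (by rw [MonoidHom.ker_rangeRestrict, hker₃, Subgroup.range_subtype])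

/-- Virtual solvability passes from a finite-index subgroup to the whole group. -/
lemma vs_of_finiteIndex_subgroup {G : Type*} [Group G] (K : Subgroup G) (hK : K.FiniteIndex)
    (h : VirtuallySolvable ↥K) : VirtuallySolvable G := by
  obtain ⟨S, hSfi, hSsolv⟩ := h
  haveI : Group.IsSolvable S := hSsolv
  refine ⟨S.map K.subtype, ?_, ?_⟩
  · constructor
    rw [Subgroup.index_map_subtype]
    exact Nat.mul_ne_zero hSfi.index_ne_zero hK.index_ne_zero
  · exact solvable_of_surjective
      (f := (Subgroup.equivMapOfInjective S K.subtype K.subtype_injective).toMonoidHom)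
      (Subgroup.equivMapOfInjective S K.subtype K.subtype_injective).surjective

/-- Extension lemma: if `A` is a normal subgroup of `G` with `↥A` virtually solvable
and `G ⧸ A` virtually solvable, then `G` is virtually solvable. -/
lemma vs_of_normal_vs_vs_quotient {G : Type*} [Group G] (A : Subgroup G) [A.Normal]
    (hA : VirtuallySolvable ↥A) (hq : VirtuallySolvable (G ⧸ A)) : VirtuallySolvable G := by
  obtain ⟨L, hLfi, hLsolv⟩ := hq
  haveI : Group.IsSolvable L := hLsolv
  set K₀ : Subgroup G := L.comap (QuotientGroup.mk' A) with hK₀def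
  have hAK₀ : A ≤ K₀ := by
    intro a ha
    show (QuotientGroup.mk' A) a ∈ L
    have : (QuotientGroup.mk' A) a = 1 := (QuotientGroup.eq_one_iff a).mpr ha
    rw [this]; exact L.one_mem
  have hK₀fi : K₀.FiniteIndex := by
    constructor
    rw [hK₀def, Subgroup.index_comap_of_surjective _ (QuotientGroup.mk'_surjective A)]
    exact hLfi.index_ne_zero
  apply vs_of_finiteIndex_subgroup K₀ hK₀fi
  -- Inside `K₀`, the subgroup `A` is normal with solvable quotient `L`.
  haveI : (A.subgroupOf K₀).Normal := Subgroup.normal_subgroupOf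
  apply vs_of_normal_vs_solvable_quotient (A.subgroupOf K₀)
  · exact vs_of_mulEquiv (Subgroup.subgroupOfEquivOfLe hAK₀).symm hA
  · -- `K₀ ⧸ A.subgroupOf K₀ ≃* L`
    set k : ↥K₀ →* G ⧸ A := (QuotientGroup.mk' A).comp K₀.subtype with hkdef
    have hker : k.ker = A.subgroupOf K₀ := by
      rw [hkdef, ← MonoidHom.comap_ker, QuotientGroup.ker_mk']
      rfl
    have hrange : k.range = L := by
      rw [hkdef, MonoidHom.range_comp, Subgroup.range_subtype, hK₀def]
      exact Subgroup.map_comap_eq_self_of_surjective (QuotientGroup.mk'_surjective A) L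
    haveI : Group.IsSolvable ↥k.range := by rw [hrange]; exact hLsolv
    have e : (↥K₀ ⧸ A.subgroupOf K₀) ≃* ↥k.range :=
      (QuotientGroup.quotientMulEquivOfEq hker.symm).trans
        (QuotientGroup.quotientKerEquivRange k)
    exact solvable_of_solvable_injective (f := e.toMonoidHom) e.injective

/-- Let `1 → N → G → H → 1` be a short exact sequence of groups.  If both `N` and `H`
satisfy the Tits alternative, then so does `G`. -/
theorem titsAlternative_of_exact {N G H : Type*} [Group N] [Group G] [Group H]
    (f : N →* G) (g : G →* H) (hf : Function.Injective f) (hg : Function.Surjective g)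
    (hexact : g.ker = f.range)
    (hN : SatisfiesTitsAlternative N) (hH : SatisfiesTitsAlternative H) :
    SatisfiesTitsAlternative G := by
  intro K
  rcases hH (K.map g) with ⟨φ, hφ⟩ | hVS
  · -- a free subgroup of the image lifts to `K`
    left
    have hex : ∀ i : Fin 2, ∃ x : ↥K, g (x : G) = ((φ (FreeGroup.of i) : ↥(K.map g)) : H) := by
      intro i
      obtain ⟨x, hxK, hx⟩ := Subgroup.mem_map.mp (φ (FreeGroup.of i) : ↥(K.map g)).2
      exact ⟨⟨x, hxK⟩, hx⟩
    choose x hx using hex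
    set ψ : FreeGroup (Fin 2) →* ↥K := FreeGroup.lift x with hψdef
    have hcomp : (g.subgroupMap K).comp ψ = φ := by
      apply FreeGroup.ext_hom
      intro i
      apply Subtype.ext
      show g ((ψ (FreeGroup.of i) : ↥K) : G) = _
      rw [hψdef]
      simp only [FreeGroup.lift_apply_of]
      exact hx i
    have hinj : Function.Injective (⇑(g.subgroupMap K) ∘ ⇑ψ) := by
      rw [← MonoidHom.coe_comp, hcomp]; exact hφ
    exact ⟨ψ, hinj.of_comp⟩
  · -- the image of `K` is virtually solvable
    -- consider the hom from `K.comap f` into `K`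
    set c : ↥(K.comap f) →* ↥K :=
      (f.comp (K.comap f).subtype).codRestrict K (fun x => x.2) with hcdef
    have hcinj : Function.Injective c := by
      intro a b hab
      have : f ((a : N)) = f ((b : N)) := congrArg Subtype.val hab
      exact Subtype.ext (hf this)
    rcases hN (K.comap f) with ⟨φ, hφ⟩ | hVSN
    · exact Or.inl ⟨c.comp φ, hcinj.comp hφ⟩
    · right
      set A : Subgroup ↥K := (g.subgroupMap K).ker with hAdef
      haveI : A.Normal := MonoidHom.normal_ker _
      -- `A` is isomorphic to `K.comap f`
      have hrange : ∀ y : ↥K, y ∈ A ↔ (y : G) ∈ f.range := by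
        intro y
        rw [← hexact]
        constructor
        · intro hy
          exact MonoidHom.mem_ker.mpr
            (congrArg Subtype.val (MonoidHom.mem_ker.mp hy))
        · intro hy
          exact MonoidHom.mem_ker.mpr (Subtype.ext (MonoidHom.mem_ker.mp hy))
      have hc' : ∀ z : ↥(K.comap f), c z ∈ A := by
        intro z
        rw [hrange]
        exact ⟨(z : N), rfl⟩
      set c' : ↥(K.comap f) →* ↥A := c.codRestrict A hc' with hc'def
      have hbij : Function.Bijective c' := by
        constructor
        · intro a b hab
          exact hcinj (congrArg Subtype.val hab)
        · rintro ⟨y, hy⟩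
          obtain ⟨n, hn⟩ := (hrange y).mp hy
          have hnK : n ∈ K.comap f := by
            show f n ∈ K
            rw [hn]; exact y.2
          refine ⟨⟨n, hnK⟩, ?_⟩
          apply Subtype.ext; apply Subtype.ext
          exact hn
      have hAvs : VirtuallySolvable ↥A := vs_of_mulEquiv (MulEquiv.ofBijective c' hbij) hVSN
      have hQvs : VirtuallySolvable (↥K ⧸ A) :=
        vs_of_mulEquiv
          (QuotientGroup.quotientKerEquivOfSurjective (g.subgroupMap K)
            (g.subgroupMap_surjective K)).symm hVS
      exact vs_of_normal_vs_vs_quotient A hAvs hQvs
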